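/- Let ν(r) = log²(2 + 1/r)·log(2 + r)/r² for r > 0 and define Ψ(x) = x²∫₀^{1/x} r² ν(r) dr + ∫_{1/x}^∞ ν(r) dr for x > 0. Then there exist constants 0 < c₁ ≤ c₂ such that c₁·x·log²(2+x)·log(2+1/x) ≤ Ψ(x) ≤ c₂·x·log²(2+x)·log(2+1/x) for all x > 0. -/

import Mathlib

open MeasureTheory Set Real

lemma log_le_rpow {y : ℝ} (hy : 0 < y) : Real.log y ≤ 4 * y ^ (4⁻¹ : ℝ) := by
  have h1 : Real.log (y ^ (4⁻¹ : ℝ)) = 4⁻¹ * Real.log y := Real.log_rpow hy _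
  have h2 : Real.log (y ^ (4⁻¹ : ℝ)) ≤ y ^ (4⁻¹ : ℝ) - 1 :=
    Real.log_le_sub_one_of_pos (Real.rpow_pos_of_pos hy _)
  linarith

lemma sq_log_le {y : ℝ} (hy : 1 ≤ y) : Real.log y ^ 2 ≤ 16 * y ^ (2⁻¹ : ℝ) := by
  have h0 : 0 ≤ Real.log y := Real.log_nonneg hy
  have h1 := log_le_rpow (lt_of_lt_of_le one_pos hy)
  have h2 : (y ^ (4⁻¹ : ℝ)) ^ 2 = y ^ (2⁻¹ : ℝ) := by
    rw [← Real.rpow_natCast (y ^ (4⁻¹ : ℝ)) 2, ← Real.rpow_mul (by linarith)]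
    norm_num
  nlinarith [Real.rpow_nonneg (by linarith : (0:ℝ) ≤ y) (4⁻¹ : ℝ)]

lemma log_half (t : ℝ) (ht : 0 ≤ t) : Real.log (2 + t) ≤ 2 * Real.log (2 + t / 2) := by
  have h1 : (2 + t : ℝ) ≤ (2 + t / 2) ^ 2 := by nlinarith
  calc Real.log (2 + t) ≤ Real.log ((2 + t / 2) ^ 2) := Real.log_le_log (by linarith) h1
    _ = 2 * Real.log (2 + t / 2) := by rw [Real.log_pow]; push_cast; ring

lemma A_le (t : ℝ) (ht : 0 < t) {r : ℝ} (hr : r ∈ Ioc (0:ℝ) t) :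
    Real.log (2 + 1 / r) ^ 2 * Real.log (2 + r) ≤
      2 * Real.log (2 + 1 / t) ^ 2 * Real.log (2 + t) +
        32 * t ^ (2⁻¹ : ℝ) * Real.log (2 + t) * r ^ (-(2⁻¹ : ℝ)) := by
  obtain ⟨hr0, hrt⟩ := hr
  have h1t : 0 < 1 / t := by positivity
  have h1r : 0 < 1 / r := by positivity
  have hineq : 2 + 1 / r ≤ (2 + 1 / t) * (t / r) := by
    have h : (2 + 1 / t) * (t / r) = (2 * t + 1) / r := by field_simp
    rw [h, le_div_iff₀ hr0]
    have h2 : (2 + 1 / r) * r = 2 * r + 1 := by field_simp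
    rw [h2]; linarith
  have hkey : Real.log (2 + 1 / r) ≤ Real.log (2 + 1 / t) + Real.log (t / r) := by
    calc Real.log (2 + 1 / r) ≤ Real.log ((2 + 1 / t) * (t / r)) :=
          Real.log_le_log (by linarith) hineq
      _ = _ := Real.log_mul (by positivity) (by positivity)
  have hb : Real.log (t / r) ^ 2 ≤ 16 * (t / r) ^ (2⁻¹ : ℝ) :=
    sq_log_le ((one_le_div hr0).2 hrt)
  have htr : (t / r) ^ (2⁻¹ : ℝ) = t ^ (2⁻¹ : ℝ) * r ^ (-(2⁻¹ : ℝ)) := by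
    rw [Real.div_rpow ht.le hr0.le, Real.rpow_neg hr0.le, div_eq_mul_inv]
  have h0a : 0 ≤ Real.log (2 + 1 / t) := Real.log_nonneg (by linarith)
  have h0b : 0 ≤ Real.log (t / r) := Real.log_nonneg ((one_le_div hr0).2 hrt)
  have h0c : 0 ≤ Real.log (2 + 1 / r) := Real.log_nonneg (by linarith)
  have hsq : Real.log (2 + 1 / r) ^ 2 ≤
      2 * Real.log (2 + 1 / t) ^ 2 + 2 * Real.log (t / r) ^ 2 := by
    nlinarith [sq_nonneg (Real.log (2 + 1 / t) - Real.log (t / r)),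
      mul_nonneg (by linarith : (0:ℝ) ≤ Real.log (2 + 1 / t) + Real.log (t / r) - Real.log (2 + 1 / r))
        (by linarith : (0:ℝ) ≤ Real.log (2 + 1 / t) + Real.log (t / r) + Real.log (2 + 1 / r))]
  have hlt : Real.log (2 + r) ≤ Real.log (2 + t) := Real.log_le_log (by linarith) (by linarith)
  have h0d : 0 ≤ Real.log (2 + r) := Real.log_nonneg (by linarith)
  have h0e : 0 ≤ t ^ (2⁻¹ : ℝ) * r ^ (-(2⁻¹ : ℝ)) := by positivity
  calc Real.log (2 + 1 / r) ^ 2 * Real.log (2 + r)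
      ≤ (2 * Real.log (2 + 1 / t) ^ 2 + 32 * (t ^ (2⁻¹ : ℝ) * r ^ (-(2⁻¹ : ℝ)))) *
          Real.log (2 + t) := by
        apply mul_le_mul _ hlt h0d (by positivity)
        nlinarith
    _ = _ := by ring

lemma A_meas : Measurable (fun r : ℝ => Real.log (2 + 1 / r) ^ 2 * Real.log (2 + r)) := by
  have h1 : Measurable fun r : ℝ => Real.log (2 + 1 / r) :=
    Real.measurable_log.comp (measurable_const.add (measurable_const.div measurable_id))
  have h2 : Measurable fun r : ℝ => Real.log (2 + r) :=
    Real.measurable_log.comp (measurable_const.add measurable_id)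
  exact (h1.pow_const 2).mul h2

lemma g_int (t : ℝ) (ht : 0 < t) :
    IntegrableOn (fun r : ℝ => 2 * Real.log (2 + 1 / t) ^ 2 * Real.log (2 + t) +
      32 * t ^ (2⁻¹ : ℝ) * Real.log (2 + t) * r ^ (-(2⁻¹ : ℝ))) (Ioc 0 t) := by
  apply Integrable.add
  · exact integrableOn_const (by rw [Real.volume_Ioc]; exact ENNReal.ofReal_ne_top)
  · have h := (intervalIntegrable_iff_integrableOn_Ioc_of_le ht.le).1
      (intervalIntegral.intervalIntegrable_rpow' (by norm_num : (-1:ℝ) < -(2⁻¹)))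
    exact h.const_mul _

lemma A_int (t : ℝ) (ht : 0 < t) :
    IntegrableOn (fun r : ℝ => Real.log (2 + 1 / r) ^ 2 * Real.log (2 + r)) (Ioc 0 t) := by
  refine (g_int t ht).mono' A_meas.aestronglyMeasurable ?_
  refine (ae_restrict_iff' measurableSet_Ioc).2 (ae_of_all _ fun r hr => ?_)
  have h0 : 0 ≤ Real.log (2 + 1 / r) ^ 2 * Real.log (2 + r) := by
    have hr0 : (0:ℝ) < r := hr.1
    exact mul_nonneg (sq_nonneg _) (Real.log_nonneg (by linarith))
  rw [Real.norm_eq_abs, abs_of_nonneg h0]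
  exact A_le t ht hr

lemma int1_le (t : ℝ) (ht : 0 < t) :
    (∫ r in Ioc (0:ℝ) t, Real.log (2 + 1 / r) ^ 2 * Real.log (2 + r)) ≤
      258 * (t * Real.log (2 + t) * Real.log (2 + 1 / t) ^ 2) := by
  have h1 : (∫ r in Ioc (0:ℝ) t, Real.log (2 + 1 / r) ^ 2 * Real.log (2 + r)) ≤
      ∫ r in Ioc (0:ℝ) t, (2 * Real.log (2 + 1 / t) ^ 2 * Real.log (2 + t) +
        32 * t ^ (2⁻¹ : ℝ) * Real.log (2 + t) * r ^ (-(2⁻¹ : ℝ))) :=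
    setIntegral_mono_on (A_int t ht) (g_int t ht) measurableSet_Ioc (fun r hr => A_le t ht hr)
  have hrpowint : (∫ r in Ioc (0:ℝ) t, r ^ (-(2⁻¹ : ℝ))) = 2 * t ^ (2⁻¹ : ℝ) := by
    rw [← intervalIntegral.integral_of_le ht.le,
      integral_rpow (Or.inl (by norm_num : (-1:ℝ) < -(2⁻¹)))]
    rw [Real.zero_rpow (by norm_num : (-(2⁻¹:ℝ) + 1) ≠ 0)]
    norm_num
    ring
  have h2 : (∫ r in Ioc (0:ℝ) t, (2 * Real.log (2 + 1 / t) ^ 2 * Real.log (2 + t) +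
        32 * t ^ (2⁻¹ : ℝ) * Real.log (2 + t) * r ^ (-(2⁻¹ : ℝ)))) =
      2 * Real.log (2 + 1 / t) ^ 2 * Real.log (2 + t) * t +
        64 * t * Real.log (2 + t) := by
    rw [integral_add (integrableOn_const (by rw [Real.volume_Ioc]; exact ENNReal.ofReal_ne_top) :
        Integrable (fun _ : ℝ => 2 * Real.log (2 + 1 / t) ^ 2 * Real.log (2 + t)) (volume.restrict (Ioc (0:ℝ) t)))
      (((intervalIntegrable_iff_integrableOn_Ioc_of_le ht.le).1
        (intervalIntegral.intervalIntegrable_rpow' (by norm_num : (-1:ℝ) < -(2⁻¹)))).const_mul _),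
      integral_const, integral_const_mul, hrpowint, measureReal_restrict_apply_univ,
      Real.volume_real_Ioc, smul_eq_mul, max_eq_left (by linarith)]
    have htt : t ^ (2⁻¹ : ℝ) * (2 * t ^ (2⁻¹ : ℝ)) = 2 * t := by
      rw [show t ^ (2⁻¹:ℝ) * (2 * t ^ (2⁻¹:ℝ)) = 2 * (t ^ (2⁻¹:ℝ) * t ^ (2⁻¹:ℝ)) by ring,
        ← Real.rpow_add ht]
      norm_num
    linear_combination (32 * Real.log (2 + t)) * htt
  have hlog2 : (0.6931471803 : ℝ) < Real.log 2 := Real.log_two_gt_d9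
  have ha : (1/2 : ℝ) ≤ Real.log (2 + 1 / t) := by
    have : Real.log 2 ≤ Real.log (2 + 1 / t) :=
      Real.log_le_log (by norm_num) (by nlinarith [one_div_pos.2 ht])
    linarith
  have hL : 0 ≤ Real.log (2 + t) := Real.log_nonneg (by linarith)
  nlinarith [mul_nonneg (mul_nonneg ht.le hL) (sq_nonneg (Real.log (2 + 1 / t))),
    mul_nonneg ht.le hL, mul_le_mul_of_nonneg_left (mul_le_mul ha ha (by norm_num) (by linarith))
      (mul_nonneg (mul_nonneg (by norm_num : (0:ℝ) ≤ 256) ht.le) hL)]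

lemma int1_ge (t : ℝ) (ht : 0 < t) :
    t / 2 * (Real.log (2 + 1 / t) ^ 2 * Real.log (2 + t / 2)) ≤
      ∫ r in Ioc (0:ℝ) t, Real.log (2 + 1 / r) ^ 2 * Real.log (2 + r) := by
  have hm : 0 ≤ᵐ[volume.restrict (Ioc (0:ℝ) t)]
      fun r : ℝ => Real.log (2 + 1 / r) ^ 2 * Real.log (2 + r) := by
    refine (ae_restrict_iff' measurableSet_Ioc).2 (ae_of_all _ fun r hr => ?_)
    have hr0 : (0:ℝ) < r := hr.1
    exact mul_nonneg (sq_nonneg _) (Real.log_nonneg (by linarith))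
  have hsub : (Ioc (t/2) t : Set ℝ) ⊆ Ioc 0 t := Ioc_subset_Ioc (by linarith) le_rfl
  have step1 : (∫ r in Ioc (t/2) t, Real.log (2 + 1 / r) ^ 2 * Real.log (2 + r)) ≤
      ∫ r in Ioc (0:ℝ) t, Real.log (2 + 1 / r) ^ 2 * Real.log (2 + r) :=
    setIntegral_mono_set (A_int t ht) hm (HasSubset.Subset.eventuallyLE hsub)
  have step2 : t / 2 * (Real.log (2 + 1 / t) ^ 2 * Real.log (2 + t / 2)) ≤
      ∫ r in Ioc (t/2) t, Real.log (2 + 1 / r) ^ 2 * Real.log (2 + r) := by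
    have hconst : (∫ _ : ℝ in Ioc (t/2) t,
        Real.log (2 + 1 / t) ^ 2 * Real.log (2 + t / 2)) =
        t / 2 * (Real.log (2 + 1 / t) ^ 2 * Real.log (2 + t / 2)) := by
      rw [integral_const, measureReal_restrict_apply_univ, Real.volume_real_Ioc, smul_eq_mul,
        max_eq_left (by linarith)]
      ring
    rw [← hconst]
    refine setIntegral_mono_on (integrableOn_const (by
        rw [Real.volume_Ioc]; exact ENNReal.ofReal_ne_top))
      ((A_int t ht).mono hsub le_rfl) measurableSet_Ioc (fun r hr => ?_)
    obtain ⟨hr1, hr2⟩ := hr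
    have hr0 : (0:ℝ) < r := by linarith
    have ha : Real.log (2 + 1 / t) ≤ Real.log (2 + 1 / r) := by
      apply Real.log_le_log (by nlinarith [one_div_pos.2 ht])
      have : 1 / t ≤ 1 / r := one_div_le_one_div_of_le hr0 hr2
      linarith
    have ha0 : 0 ≤ Real.log (2 + 1 / t) := Real.log_nonneg (by nlinarith [one_div_pos.2 ht])
    have hb : Real.log (2 + t / 2) ≤ Real.log (2 + r) :=
      Real.log_le_log (by linarith) (by linarith)
    have hb0 : 0 ≤ Real.log (2 + t / 2) := Real.log_nonneg (by linarith)
    exact mul_le_mul (by nlinarith) hb hb0 (sq_nonneg _)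
  linarith

lemma h2_int (t : ℝ) (ht : 0 < t) :
    IntegrableOn (fun r : ℝ => Real.log (2 + 1 / t) ^ 2 * (Real.log (2 + t) * r ^ (-2 : ℝ) +
      4 * t ^ (-(4⁻¹:ℝ)) * r ^ (-(7/4) : ℝ))) (Ioi t) := by
  apply Integrable.const_mul
  exact ((integrableOn_Ioi_rpow_of_lt (by norm_num) ht).const_mul _).add
    ((integrableOn_Ioi_rpow_of_lt (by norm_num) ht).const_mul _)

lemma hpt_le (t : ℝ) (ht : 0 < t) {r : ℝ} (hr : r ∈ Ioi t) :
    Real.log (2 + 1 / r) ^ 2 * Real.log (2 + r) / r ^ 2 ≤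
      Real.log (2 + 1 / t) ^ 2 * (Real.log (2 + t) * r ^ (-2 : ℝ) +
        4 * t ^ (-(4⁻¹:ℝ)) * r ^ (-(7/4) : ℝ)) := by
  have hr0 : 0 < r := lt_trans ht hr
  have hrt : t ≤ r := (le_of_lt hr)
  have ha : Real.log (2 + 1 / r) ≤ Real.log (2 + 1 / t) := by
    apply Real.log_le_log (by nlinarith [one_div_pos.2 hr0])
    have : 1 / r ≤ 1 / t := one_div_le_one_div_of_le ht hrt
    linarith
  have ha0 : 0 ≤ Real.log (2 + 1 / r) := Real.log_nonneg (by nlinarith [one_div_pos.2 hr0])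
  have hsq : Real.log (2 + 1 / r) ^ 2 ≤ Real.log (2 + 1 / t) ^ 2 := by nlinarith
  -- log (2+r) ≤ log (2+t) + log (r/t) ≤ log (2+t) + 4 (r/t)^{1/4}
  have hineq : 2 + r ≤ (2 + t) * (r / t) := by
    have h : (2 + t) * (r / t) = (2 * r / t) + r := by field_simp
    rw [h]
    have : 2 ≤ 2 * r / t := by rw [le_div_iff₀ ht]; linarith
    linarith
  have hkey : Real.log (2 + r) ≤ Real.log (2 + t) + 4 * (r / t) ^ (4⁻¹ : ℝ) := by
    calc Real.log (2 + r) ≤ Real.log ((2 + t) * (r / t)) :=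
          Real.log_le_log (by linarith) hineq
      _ = Real.log (2 + t) + Real.log (r / t) :=
          Real.log_mul (by positivity) (by positivity)
      _ ≤ _ := by linarith [log_le_rpow (by positivity : (0:ℝ) < r / t)]
  have hb0 : 0 ≤ Real.log (2 + r) := Real.log_nonneg (by linarith)
  have hL0 : 0 ≤ Real.log (2 + t) := Real.log_nonneg (by linarith)
  have hrpow : (r / t) ^ (4⁻¹ : ℝ) = t ^ (-(4⁻¹:ℝ)) * r ^ (4⁻¹ : ℝ) := by
    rw [Real.div_rpow hr0.le ht.le, Real.rpow_neg ht.le, div_eq_mul_inv]; ring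
  have hr2 : (r:ℝ) ^ (2:ℕ) = r ^ (2:ℝ) := by
    rw [← Real.rpow_natCast r 2]; norm_num
  have hdiv1 : Real.log (2 + t) / r ^ 2 = Real.log (2 + t) * r ^ (-2 : ℝ) := by
    rw [hr2, Real.rpow_neg hr0.le, div_eq_mul_inv]
  have hdiv2 : r ^ (4⁻¹ : ℝ) / r ^ 2 = r ^ (-(7/4) : ℝ) := by
    rw [hr2, ← Real.rpow_sub hr0]
    norm_num
  rw [hrpow] at hkey
  have hfinal : Real.log (2 + 1 / r) ^ 2 * Real.log (2 + r) / r ^ 2 ≤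
      Real.log (2 + 1 / t) ^ 2 * (Real.log (2 + t) + 4 * (t ^ (-(4⁻¹:ℝ)) * r ^ (4⁻¹ : ℝ))) / r ^ 2 := by
    gcongr
  have heq : Real.log (2 + 1 / t) ^ 2 *
      (Real.log (2 + t) + 4 * (t ^ (-(4⁻¹:ℝ)) * r ^ (4⁻¹ : ℝ))) / r ^ 2 =
      Real.log (2 + 1 / t) ^ 2 * (Real.log (2 + t) / r ^ 2 +
        4 * t ^ (-(4⁻¹:ℝ)) * (r ^ (4⁻¹ : ℝ) / r ^ 2)) := by ring
  rw [heq, hdiv1, hdiv2] at hfinal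
  exact hfinal

lemma h_meas : Measurable (fun r : ℝ => Real.log (2 + 1 / r) ^ 2 * Real.log (2 + r) / r ^ 2) :=
  A_meas.div (measurable_id.pow_const 2)

lemma h_int (t : ℝ) (ht : 0 < t) :
    IntegrableOn (fun r : ℝ => Real.log (2 + 1 / r) ^ 2 * Real.log (2 + r) / r ^ 2) (Ioi t) := by
  refine (h2_int t ht).mono' h_meas.aestronglyMeasurable ?_
  refine (ae_restrict_iff' measurableSet_Ioi).2 (ae_of_all _ fun r hr => ?_)
  have hr0 : (0:ℝ) < r := lt_trans ht hr
  have h0 : 0 ≤ Real.log (2 + 1 / r) ^ 2 * Real.log (2 + r) / r ^ 2 := by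
    have := Real.log_nonneg (by linarith : (1:ℝ) ≤ 2 + r)
    positivity
  rw [Real.norm_eq_abs, abs_of_nonneg h0]
  exact hpt_le t ht hr

lemma int2_le (t : ℝ) (ht : 0 < t) :
    (∫ r in Ioi t, Real.log (2 + 1 / r) ^ 2 * Real.log (2 + r) / r ^ 2) ≤
      12 * (Real.log (2 + 1 / t) ^ 2 * Real.log (2 + t) / t) := by
  have h1 : (∫ r in Ioi t, Real.log (2 + 1 / r) ^ 2 * Real.log (2 + r) / r ^ 2) ≤
      ∫ r in Ioi t, Real.log (2 + 1 / t) ^ 2 * (Real.log (2 + t) * r ^ (-2 : ℝ) +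
        4 * t ^ (-(4⁻¹:ℝ)) * r ^ (-(7/4) : ℝ)) :=
    setIntegral_mono_on (h_int t ht) (h2_int t ht) measurableSet_Ioi (fun r hr => hpt_le t ht hr)
  have e1 : (∫ r in Ioi t, r ^ (-2 : ℝ)) = 1 / t := by
    rw [integral_Ioi_rpow_of_lt (by norm_num) ht, show (-2:ℝ) + 1 = -1 by norm_num,
      Real.rpow_neg_one]
    field_simp
  have e2 : (∫ r in Ioi t, r ^ (-(7/4) : ℝ)) = (4/3) * t ^ (-(3/4) : ℝ) := by
    rw [integral_Ioi_rpow_of_lt (by norm_num) ht, show (-(7/4):ℝ) + 1 = -(3/4) by norm_num]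
    ring
  have e3 : t ^ (-(4⁻¹:ℝ)) * t ^ (-(3/4) : ℝ) = 1 / t := by
    rw [← Real.rpow_add ht, show (-(4⁻¹:ℝ)) + (-(3/4)) = -1 by norm_num, Real.rpow_neg_one,
      one_div]
  have h2 : (∫ r in Ioi t, Real.log (2 + 1 / t) ^ 2 * (Real.log (2 + t) * r ^ (-2 : ℝ) +
        4 * t ^ (-(4⁻¹:ℝ)) * r ^ (-(7/4) : ℝ))) =
      Real.log (2 + 1 / t) ^ 2 * (Real.log (2 + t) * (1 / t) +
        4 * t ^ (-(4⁻¹:ℝ)) * ((4/3) * t ^ (-(3/4) : ℝ))) := by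
    rw [integral_const_mul, integral_add ((integrableOn_Ioi_rpow_of_lt (by norm_num) ht).const_mul _)
      ((integrableOn_Ioi_rpow_of_lt (by norm_num) ht).const_mul _),
      integral_const_mul, integral_const_mul, e1, e2]
  have hlog2 : (0.6931471803 : ℝ) < Real.log 2 := Real.log_two_gt_d9
  have hL : (1/2 : ℝ) ≤ Real.log (2 + t) := by
    have : Real.log 2 ≤ Real.log (2 + t) := Real.log_le_log (by norm_num) (by linarith)
    linarith
  have ha0 : 0 ≤ Real.log (2 + 1 / t) ^ 2 := sq_nonneg _
  have htinv : 0 < 1 / t := by positivity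
  have key : Real.log (2 + 1 / t) ^ 2 * (Real.log (2 + t) * (1 / t) +
      4 * t ^ (-(4⁻¹:ℝ)) * ((4/3) * t ^ (-(3/4) : ℝ))) ≤
      12 * (Real.log (2 + 1 / t) ^ 2 * Real.log (2 + t) / t) := by
    have e4 : 4 * t ^ (-(4⁻¹:ℝ)) * ((4/3) * t ^ (-(3/4) : ℝ)) = (16/3) * (1/t) := by
      rw [show 4 * t ^ (-(4⁻¹:ℝ)) * ((4/3) * t ^ (-(3/4) : ℝ)) =
        (16/3) * (t ^ (-(4⁻¹:ℝ)) * t ^ (-(3/4) : ℝ)) by ring, e3]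
    rw [e4]
    have h5 : Real.log (2 + t) * (1/t) + (16/3) * (1/t) ≤ 12 * (Real.log (2 + t) * (1/t)) := by
      nlinarith
    calc Real.log (2 + 1 / t) ^ 2 * (Real.log (2 + t) * (1/t) + (16/3) * (1/t)) ≤
          Real.log (2 + 1 / t) ^ 2 * (12 * (Real.log (2 + t) * (1/t))) :=
        mul_le_mul_of_nonneg_left h5 ha0
      _ = 12 * (Real.log (2 + 1 / t) ^ 2 * Real.log (2 + t) / t) := by ring
  linarith [h1, h2.le, h2.ge, key]

theorem stmt15 :
    ∃ c₁ c₂ : ℝ, 0 < c₁ ∧ c₁ ≤ c₂ ∧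
      ∀ x : ℝ, 0 < x →
        c₁ * (x * Real.log (2 + x) ^ 2 * Real.log (2 + 1 / x)) ≤
            x ^ 2 * (∫ r in Ioc (0 : ℝ) (1 / x),
                r ^ 2 * (Real.log (2 + 1 / r) ^ 2 * Real.log (2 + r) / r ^ 2)) +
              (∫ r in Ioi (1 / x),
                Real.log (2 + 1 / r) ^ 2 * Real.log (2 + r) / r ^ 2) ∧
          x ^ 2 * (∫ r in Ioc (0 : ℝ) (1 / x),
                r ^ 2 * (Real.log (2 + 1 / r) ^ 2 * Real.log (2 + r) / r ^ 2)) +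
              (∫ r in Ioi (1 / x),
                Real.log (2 + 1 / r) ^ 2 * Real.log (2 + r) / r ^ 2) ≤
            c₂ * (x * Real.log (2 + x) ^ 2 * Real.log (2 + 1 / x)) := by
  refine ⟨1/4, 300, by norm_num, by norm_num, fun x hx => ?_⟩
  have ht : (0:ℝ) < 1 / x := by positivity
  have hcongr : (∫ r in Ioc (0 : ℝ) (1 / x),
      r ^ 2 * (Real.log (2 + 1 / r) ^ 2 * Real.log (2 + r) / r ^ 2)) =
      ∫ r in Ioc (0 : ℝ) (1 / x), Real.log (2 + 1 / r) ^ 2 * Real.log (2 + r) := by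
    refine setIntegral_congr_fun measurableSet_Ioc (fun r hr => ?_)
    have hr0 : r ≠ 0 := ne_of_gt hr.1
    field_simp
  rw [hcongr]
  set I1 := ∫ r in Ioc (0 : ℝ) (1 / x), Real.log (2 + 1 / r) ^ 2 * Real.log (2 + r) with hI1
  set I2 := ∫ r in Ioi (1 / x), Real.log (2 + 1 / r) ^ 2 * Real.log (2 + r) / r ^ 2 with hI2
  have h_up1 := int1_le (1 / x) ht
  have h_up2 := int2_le (1 / x) ht
  have h_low := int1_ge (1 / x) ht
  rw [one_div_one_div] at h_up1 h_up2 h_low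
  have h2nn : 0 ≤ I2 := by
    refine setIntegral_nonneg measurableSet_Ioi (fun r hr => ?_)
    have hr0 : (0:ℝ) < r := lt_trans ht hr
    have := Real.log_nonneg (by linarith : (1:ℝ) ≤ 2 + r)
    positivity
  have hxl : 0 ≤ x * Real.log (2 + x) ^ 2 := mul_nonneg hx.le (sq_nonneg _)
  have hlg1x : 0 ≤ Real.log (2 + 1 / x) := Real.log_nonneg (by linarith)
  have hlgx : 0 ≤ Real.log (2 + x) := Real.log_nonneg (by linarith)
  constructor
  · -- lower bound
    have hlh : 0 ≤ Real.log (2 + 1 / x / 2) := Real.log_nonneg (by linarith)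
    have hhalf : Real.log (2 + 1 / x) ≤ 2 * Real.log (2 + 1 / x / 2) := log_half (1 / x) ht.le
    have k1 : x ^ 2 * (1 / x / 2 * (Real.log (2 + x) ^ 2 * Real.log (2 + 1 / x / 2))) ≤
        x ^ 2 * I1 := mul_le_mul_of_nonneg_left h_low (sq_nonneg x)
    have k2 : x ^ 2 * (1 / x / 2 * (Real.log (2 + x) ^ 2 * Real.log (2 + 1 / x / 2))) =
        x / 2 * (Real.log (2 + x) ^ 2 * Real.log (2 + 1 / x / 2)) := by
      field_simp
    nlinarith [mul_le_mul_of_nonneg_left hhalf hxl]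
  · -- upper bound
    have hb1 : x ^ 2 * I1 ≤ 258 * (x * Real.log (2 + 1 / x) * Real.log (2 + x) ^ 2) := by
      calc x ^ 2 * I1 ≤ x ^ 2 * (258 * (1 / x * Real.log (2 + 1 / x) * Real.log (2 + x) ^ 2)) :=
            mul_le_mul_of_nonneg_left h_up1 (sq_nonneg x)
        _ = 258 * (x * Real.log (2 + 1 / x) * Real.log (2 + x) ^ 2) := by field_simp
    have hb2 : I2 ≤ 12 * (Real.log (2 + x) ^ 2 * Real.log (2 + 1 / x) * x) := by
      have he : 12 * (Real.log (2 + x) ^ 2 * Real.log (2 + 1 / x) / (1 / x)) =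
          12 * (Real.log (2 + x) ^ 2 * Real.log (2 + 1 / x) * x) := by
        field_simp
      rw [he] at h_up2
      exact h_up2
    nlinarith [mul_nonneg hxl hlg1x]
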